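/- Assume (A2), (A3) and (A4). Let A_K be the K×K matrix with entries [A_K]_{ℓm} = (1/K) · ( (1/K) tr( D_ℓ D_m T(−ρ)² ) ) / ( 1 + (1/K) tr( D_ℓ T(−ρ) ) )², let Δ_K = diag( (1 + (1/K) tr( D_ℓ T(−ρ) ))² ; 1 ≤ ℓ ≤ K ), and let g_K be the K×1 vector with entries (1/K) tr( D₀ D_k T(−ρ)² ), 1 ≤ k ≤ K. Then I_K − A_K is invertible, so the sequence Θ_K² = (1/K) g_Kᵀ (I_K − A_K)^{-1} Δ_K^{-1} g_K + ( E|W_{10}|⁴ − 1 ) (1/K) tr( D₀² T(−ρ)² ) is well defined, and it satisfies 0 < liminf_K Θ_K² ≤ limsup_K Θ_K² < ∞. -/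

import Mathlib

open MeasureTheory ProbabilityTheory Matrix Filter
open scoped BigOperators ENNReal NNReal

noncomputable section

lemma aux_le_zero_of_pow {θ M x : ℝ} (hθ1 : θ < 1)
    (h : ∀ p : ℕ, x ≤ θ ^ p * M) : x ≤ 0 := by
  by_contra hx
  push_neg at hx
  have hM : 0 < M := by have := h 0; simp at this; linarith
  obtain ⟨p, hp⟩ := exists_pow_lt_of_lt_one (div_pos hx hM) hθ1
  have h2 : θ ^ p * M < (x / M) * M := mul_lt_mul_of_pos_right hp hM
  rw [div_mul_cancel₀ _ hM.ne'] at h2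
  linarith [h p]
lemma aux_matrix_key {K : ℕ} (A : Matrix (Fin K) (Fin K) ℝ) (w : Fin K → ℝ) (θ : ℝ)
    (hθ0 : 0 ≤ θ) (hθ1 : θ < 1) (hA : ∀ ℓ m, 0 ≤ A ℓ m) (hw : ∀ ℓ, 0 < w ℓ)
    (hrow : ∀ ℓ, ∑ m, A ℓ m * w m ≤ θ * w ℓ) :
    IsUnit (1 - A) ∧ (∀ ℓ m, 0 ≤ (1 - A)⁻¹ ℓ m) ∧ (∀ ℓ, 1 ≤ (1 - A)⁻¹ ℓ ℓ) ∧
    ∀ ℓ, ∑ m, (1 - A)⁻¹ ℓ m * w m ≤ w ℓ / (1 - θ) := by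
  have hθ1' : 0 < 1 - θ := by linarith
  -- determinant nonzero
  have hdet : (1 - A).det ≠ 0 := by
    intro h
    obtain ⟨v, hv0, hv⟩ := Matrix.exists_mulVec_eq_zero_iff.mpr h
    obtain ⟨ℓ₁, hℓ₁⟩ := Function.ne_iff.mp hv0
    rw [Matrix.sub_mulVec, Matrix.one_mulVec, sub_eq_zero] at hv
    have hvA : ∀ ℓ, v ℓ = ∑ m, A ℓ m * v m := by
      intro ℓ
      have := congrFun hv ℓ
      simpa [Matrix.mulVec, dotProduct] using this
    obtain ⟨ℓ₀, -, hmax⟩ := Finset.exists_max_image Finset.univ (fun ℓ => |v ℓ| / w ℓ)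
      ⟨ℓ₁, Finset.mem_univ _⟩
    set M : ℝ := |v ℓ₀| / w ℓ₀ with hM
    have hM0 : 0 ≤ M := div_nonneg (abs_nonneg _) (hw ℓ₀).le
    have hbound : ∀ m, |v m| ≤ M * w m := by
      intro m
      have := hmax m (Finset.mem_univ m)
      exact (div_le_iff₀ (hw m)).mp this
    have h1 : |v ℓ₀| ≤ θ * (M * w ℓ₀) := by
      calc |v ℓ₀| = |∑ m, A ℓ₀ m * v m| := by rw [← hvA]
        _ ≤ ∑ m, |A ℓ₀ m * v m| := Finset.abs_sum_le_sum_abs _ _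
        _ = ∑ m, A ℓ₀ m * |v m| := by
            refine Finset.sum_congr rfl fun m _ => ?_
            rw [abs_mul, abs_of_nonneg (hA ℓ₀ m)]
        _ ≤ ∑ m, A ℓ₀ m * (M * w m) :=
            Finset.sum_le_sum fun m _ => mul_le_mul_of_nonneg_left (hbound m) (hA ℓ₀ m)
        _ = M * ∑ m, A ℓ₀ m * w m := by rw [Finset.mul_sum]; exact Finset.sum_congr rfl fun m _ => by ring
        _ ≤ M * (θ * w ℓ₀) := mul_le_mul_of_nonneg_left (hrow ℓ₀) hM0
        _ = θ * (M * w ℓ₀) := by ring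
    have hMw : M * w ℓ₀ = |v ℓ₀| := div_mul_cancel₀ _ (hw ℓ₀).ne'
    rw [hMw] at h1
    have hv00 : |v ℓ₀| ≤ 0 := by nlinarith [abs_nonneg (v ℓ₀)]
    have hM00 : M ≤ 0 := by
      rw [hM]; exact div_nonpos_of_nonpos_of_nonneg hv00 (hw ℓ₀).le
    have := hbound ℓ₁
    have : |v ℓ₁| ≤ 0 := le_trans this (by nlinarith [(hw ℓ₁).le, hw ℓ₁])
    simp only [Pi.zero_apply] at hℓ₁
    exact hℓ₁ (abs_nonpos_iff.mp this)
  have hunit : IsUnit (1 - A) := (Matrix.isUnit_iff_isUnit_det _).mpr (isUnit_iff_ne_zero.mpr hdet)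
  set C := (1 - A)⁻¹ with hC
  have hCid : (1 - A) * C = 1 := Matrix.mul_nonsing_inv _ (isUnit_iff_ne_zero.mpr hdet)
  -- geometric expansion
  have hgeom : ∀ p : ℕ, C = (∑ n ∈ Finset.range p, A ^ n) + A ^ p * C := by
    intro p
    have hgs : (∑ n ∈ Finset.range p, A ^ n) * (1 - A) = 1 - A ^ p := by
      have h := geom_sum_mul A p
      calc (∑ n ∈ Finset.range p, A ^ n) * (1 - A)
          = -((∑ n ∈ Finset.range p, A ^ n) * (A - 1)) := by rw [← mul_neg, neg_sub]
        _ = -(A ^ p - 1) := by rw [h]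
        _ = 1 - A ^ p := neg_sub _ _
    have := congrArg (· * C) hgs
    rw [mul_assoc, hCid, mul_one, sub_mul, one_mul] at this
    rw [this]; abel
  -- entrywise nonnegativity and weighted row bounds for powers
  have hApos : ∀ (p : ℕ) (ℓ m : Fin K), 0 ≤ (A ^ p) ℓ m := by
    intro p
    induction p with
    | zero => intro ℓ m; rw [pow_zero]; by_cases h : ℓ = m <;> simp [Matrix.one_apply, h]
    | succ q ih =>
      intro ℓ m
      rw [pow_succ, Matrix.mul_apply]
      exact Finset.sum_nonneg fun k _ => mul_nonneg (ih ℓ k) (hA k m)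
  have hApow : ∀ (p : ℕ) (ℓ : Fin K), ∑ m, (A ^ p) ℓ m * w m ≤ θ ^ p * w ℓ := by
    intro p
    induction p with
    | zero =>
      intro ℓ
      simp [Matrix.one_apply, Finset.sum_ite_eq, ite_mul]
    | succ q ih =>
      intro ℓ
      have : ∑ m, (A ^ (q + 1)) ℓ m * w m = ∑ k, A ℓ k * ∑ m, (A ^ q) k m * w m := by
        simp_rw [pow_succ', Matrix.mul_apply, Finset.sum_mul, Finset.mul_sum]
        rw [Finset.sum_comm]
        exact Finset.sum_congr rfl fun k _ => Finset.sum_congr rfl fun m _ => by ring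
      rw [this]
      calc ∑ k, A ℓ k * ∑ m, (A ^ q) k m * w m
          ≤ ∑ k, A ℓ k * (θ ^ q * w k) :=
            Finset.sum_le_sum fun k _ => mul_le_mul_of_nonneg_left (ih k) (hA ℓ k)
        _ = θ ^ q * ∑ k, A ℓ k * w k := by
            rw [Finset.mul_sum]; exact Finset.sum_congr rfl fun k _ => by ring
        _ ≤ θ ^ q * (θ * w ℓ) := mul_le_mul_of_nonneg_left (hrow ℓ) (pow_nonneg hθ0 q)
        _ = θ ^ (q + 1) * w ℓ := by ring
  -- bound on entries of C
  set Cb : ℝ := ∑ k, ∑ j, |C k j| with hCbdef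
  have hCb0 : 0 ≤ Cb := Finset.sum_nonneg fun k _ => Finset.sum_nonneg fun j _ => abs_nonneg _
  have hCb : ∀ k j, |C k j| ≤ Cb := by
    intro k j
    calc |C k j| ≤ ∑ j', |C k j'| :=
          Finset.single_le_sum (f := fun j' => |C k j'|) (fun j' _ => abs_nonneg _)
            (Finset.mem_univ j)
      _ ≤ Cb := Finset.single_le_sum (f := fun k' => ∑ j', |C k' j'|)
          (fun k' _ => Finset.sum_nonneg fun j' _ => abs_nonneg _) (Finset.mem_univ k)
  -- error bound
  have herr : ∀ ℓ : Fin K, ∃ E : ℝ, 0 ≤ E ∧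
      ∀ (m : Fin K) (p : ℕ), |(A ^ p * C) ℓ m| ≤ θ ^ p * E := by
    intro ℓ
    have hne : (Finset.univ : Finset (Fin K)).Nonempty := ⟨ℓ, Finset.mem_univ _⟩
    set wm : ℝ := Finset.univ.inf' hne w with hwm
    have hwm0 : 0 < wm := (Finset.lt_inf'_iff hne).mpr fun i _ => hw i
    have hwmle : ∀ k, wm ≤ w k := fun k => Finset.inf'_le _ (Finset.mem_univ k)
    refine ⟨Cb * w ℓ / wm, div_nonneg (mul_nonneg hCb0 (hw ℓ).le) hwm0.le, fun m p => ?_⟩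
    have h1 : |(A ^ p * C) ℓ m| ≤ Cb * ∑ k, (A ^ p) ℓ k := by
      rw [Matrix.mul_apply]
      calc |∑ k, (A ^ p) ℓ k * C k m| ≤ ∑ k, |(A ^ p) ℓ k * C k m| :=
            Finset.abs_sum_le_sum_abs _ _
        _ ≤ ∑ k, (A ^ p) ℓ k * Cb := by
            refine Finset.sum_le_sum fun k _ => ?_
            rw [abs_mul, abs_of_nonneg (hApos p ℓ k)]
            exact mul_le_mul_of_nonneg_left (hCb k m) (hApos p ℓ k)
        _ = Cb * ∑ k, (A ^ p) ℓ k := by rw [Finset.mul_sum]; exact Finset.sum_congr rfl fun k _ => by ring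
    have h2 : ∑ k, (A ^ p) ℓ k ≤ θ ^ p * w ℓ / wm := by
      have : ∑ k, (A ^ p) ℓ k * wm ≤ ∑ k, (A ^ p) ℓ k * w k :=
        Finset.sum_le_sum fun k _ => mul_le_mul_of_nonneg_left (hwmle k) (hApos p ℓ k)
      rw [← Finset.sum_mul] at this
      have := le_trans this (hApow p ℓ)
      rw [le_div_iff₀ hwm0]
      linarith
    calc |(A ^ p * C) ℓ m| ≤ Cb * (θ ^ p * w ℓ / wm) :=
          le_trans h1 (mul_le_mul_of_nonneg_left h2 hCb0)
      _ = θ ^ p * (Cb * w ℓ / wm) := by ring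
  refine ⟨hunit, ?_, ?_, ?_⟩
  · -- nonnegativity
    intro ℓ m
    obtain ⟨E, hE0, hE⟩ := herr ℓ
    rw [← neg_nonpos]
    apply aux_le_zero_of_pow hθ1 (M := E)
    intro p
    have hg := hgeom p
    have hgm := congrFun (congrFun hg ℓ) m
    rw [Matrix.add_apply, Matrix.sum_apply] at hgm
    have hS : 0 ≤ ∑ n ∈ Finset.range p, (A ^ n) ℓ m :=
      Finset.sum_nonneg fun n _ => hApos n ℓ m
    have := hE m p
    have := neg_abs_le ((A ^ p * C) ℓ m)
    linarith
  · -- diagonal at least one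
    intro ℓ
    obtain ⟨E, hE0, hE⟩ := herr ℓ
    have key : (1 : ℝ) - C ℓ ℓ ≤ 0 := by
      apply aux_le_zero_of_pow hθ1 (M := E)
      intro p
      have hg := hgeom (p + 1)
      have hgm := congrFun (congrFun hg ℓ) ℓ
      rw [Matrix.add_apply, Matrix.sum_apply] at hgm
      have hS : (1 : ℝ) ≤ ∑ n ∈ Finset.range (p + 1), (A ^ n) ℓ ℓ := by
        have h0 : (A ^ 0) ℓ ℓ = 1 := by rw [pow_zero, Matrix.one_apply_eq]
        calc (1 : ℝ) = (A ^ 0) ℓ ℓ := h0.symm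
          _ ≤ ∑ n ∈ Finset.range (p + 1), (A ^ n) ℓ ℓ :=
            Finset.single_le_sum (f := fun n => (A ^ n) ℓ ℓ)
              (fun n _ => hApos n ℓ ℓ) (Finset.mem_range.mpr p.succ_pos)
      have h1 := hE ℓ (p + 1)
      have h2 : θ ^ (p + 1) * E ≤ θ ^ p * E :=
        mul_le_mul_of_nonneg_right (pow_le_pow_of_le_one hθ0 hθ1.le p.le_succ) hE0
      have := neg_abs_le ((A ^ (p + 1) * C) ℓ ℓ)
      linarith
    linarith
  · -- weighted row sums
    intro ℓ
    obtain ⟨E, hE0, hE⟩ := herr ℓ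
    have key : (∑ m, C ℓ m * w m) - w ℓ / (1 - θ) ≤ 0 := by
      apply aux_le_zero_of_pow hθ1 (M := E * ∑ m, w m)
      intro p
      have hg := hgeom p
      have hsplit : ∑ m, C ℓ m * w m =
          (∑ m, (∑ n ∈ Finset.range p, (A ^ n) ℓ m) * w m) +
          ∑ m, (A ^ p * C) ℓ m * w m := by
        rw [← Finset.sum_add_distrib]
        refine Finset.sum_congr rfl fun m _ => ?_
        have hgm := congrFun (congrFun hg ℓ) m
        rw [Matrix.add_apply, Matrix.sum_apply] at hgm
        rw [hgm]; ring
      have hmain : ∑ m, (∑ n ∈ Finset.range p, (A ^ n) ℓ m) * w m ≤ w ℓ / (1 - θ) := by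
        have h1 : ∑ m, (∑ n ∈ Finset.range p, (A ^ n) ℓ m) * w m
            = ∑ n ∈ Finset.range p, ∑ m, (A ^ n) ℓ m * w m := by
          rw [Finset.sum_comm]
          exact Finset.sum_congr rfl fun m _ => by rw [Finset.sum_mul]
        rw [h1]
        calc ∑ n ∈ Finset.range p, ∑ m, (A ^ n) ℓ m * w m
            ≤ ∑ n ∈ Finset.range p, θ ^ n * w ℓ :=
              Finset.sum_le_sum fun n _ => hApow n ℓ
          _ = (∑ n ∈ Finset.range p, θ ^ n) * w ℓ := by rw [Finset.sum_mul]
          _ ≤ (1 / (1 - θ)) * w ℓ := by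
              refine mul_le_mul_of_nonneg_right ?_ (hw ℓ).le
              rw [geom_sum_eq (by linarith : θ ≠ 1)]
              have heq : (θ ^ p - 1) / (θ - 1) = (1 - θ ^ p) / (1 - θ) := by
                rw [← neg_div_neg_eq]; ring_nf
              rw [heq, div_le_div_iff₀ hθ1' hθ1']
              nlinarith [pow_nonneg hθ0 p]
          _ = w ℓ / (1 - θ) := by ring
      have herrsum : ∑ m, (A ^ p * C) ℓ m * w m ≤ θ ^ p * (E * ∑ m, w m) := by
        calc ∑ m, (A ^ p * C) ℓ m * w m ≤ ∑ m, (θ ^ p * E) * w m := by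
              refine Finset.sum_le_sum fun m _ => ?_
              exact mul_le_mul_of_nonneg_right
                (le_trans (le_abs_self _) (hE m p)) (hw m).le
          _ = θ ^ p * (E * ∑ m, w m) := by rw [← Finset.mul_sum]; ring
      linarith
    linarith
lemma aux_m4_ge_one {Ω : Type} [MeasurableSpace Ω] (μ : Measure Ω) [IsProbabilityMeasure μ]
    (W : Ω → ℂ) (hWmeas : Measurable W)
    (hWvar : ∫ ω, ‖W ω‖ ^ 2 ∂μ = 1)
    (hW4 : Integrable (fun ω => ‖W ω‖ ^ 4) μ) :
    1 ≤ ∫ ω, ‖W ω‖ ^ 4 ∂μ := by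
  have hmeas2 : AEStronglyMeasurable (fun ω => ‖W ω‖ ^ 2) μ :=
    ((hWmeas.norm).pow_const 2).aestronglyMeasurable
  have hint2 : Integrable (fun ω => ‖W ω‖ ^ 2) μ := by
    refine (hW4.add (integrable_const 1)).mono hmeas2 (Filter.Eventually.of_forall fun ω => ?_)
    have h0 : (0:ℝ) ≤ ‖W ω‖ := norm_nonneg _
    simp only [Pi.add_apply, Real.norm_eq_abs]
    rw [abs_of_nonneg (by positivity : (0:ℝ) ≤ ‖W ω‖ ^ 2),
      abs_of_nonneg (by positivity : (0:ℝ) ≤ ‖W ω‖ ^ 4 + 1)]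
    nlinarith [sq_nonneg (‖W ω‖ ^ 2 - 1)]
  have hint : Integrable (fun ω => ‖W ω‖ ^ 4 - 2 * ‖W ω‖ ^ 2 + 1) μ :=
    (hW4.sub (hint2.const_mul 2)).add (integrable_const 1)
  have h0 : (0:ℝ) ≤ ∫ ω, (‖W ω‖ ^ 2 - 1) ^ 2 ∂μ := integral_nonneg fun ω => sq_nonneg _
  have heq : ∫ ω, (‖W ω‖ ^ 2 - 1) ^ 2 ∂μ = ∫ ω, (‖W ω‖ ^ 4 - 2 * ‖W ω‖ ^ 2 + 1) ∂μ := by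
    refine integral_congr_ae (Filter.Eventually.of_forall fun ω => ?_)
    ring
  have hsub : Integrable (fun ω => ‖W ω‖ ^ 4 - 2 * ‖W ω‖ ^ 2) μ := hW4.sub (hint2.const_mul 2)
  rw [heq, integral_add hsub (integrable_const 1),
    integral_sub hW4 (hint2.const_mul 2), MeasureTheory.integral_const_mul, hWvar] at h0
  simp only [MeasureTheory.integral_const, probReal_univ, smul_eq_mul,
    mul_one] at h0
  linarith

set_option maxHeartbeats 2000000 in
theorem stmt_7
    {Ω : Type} [MeasurableSpace Ω] (μ : Measure Ω) [IsProbabilityMeasure μ]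
    (ρ : ℝ) (hρ : 0 < ρ)
    (N : ℕ → ℕ) (hNpos : ∀ K, 0 < N K)
    (hratio_lb : ∃ c : ℝ, 0 < c ∧ ∀ᶠ (K : ℕ) in atTop, c ≤ (K : ℝ) / (N K : ℝ))
    (hratio_ub : ∃ C : ℝ, ∀ᶠ (K : ℕ) in atTop, (K : ℝ) / (N K : ℝ) ≤ C)
    (σ : (K : ℕ) → Fin (N K) → Fin (K + 1) → ℝ)
    (hσ : ∀ K n k, 0 ≤ σ K n k)
    (σmax : ℝ) (hA2 : ∀ K n k, σ K n k ≤ σmax)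
    -- the random variable `W_{10}`, with unit second moment and finite fourth moment
    (W : Ω → ℂ) (hWmeas : Measurable W)
    (hWvar : ∫ ω, ‖W ω‖ ^ 2 ∂μ = 1)
    (hW4 : Integrable (fun ω => ‖W ω‖ ^ 4) μ)
    -- (A3)
    (hA3 : ∃ c : ℝ, 0 < c ∧ ∀ᶠ (K : ℕ) in atTop, ∀ k : Fin (K + 1),
      c ≤ (1 / (K : ℝ)) * ∑ n, (σ K n k) ^ 2)
    -- (A4)
    (hA4 : 1 < ∫ ω, ‖W ω‖ ^ 4 ∂μ ∨
      ∃ c : ℝ, 0 < c ∧ ∀ᶠ (K : ℕ) in atTop,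
        c ≤ (1 / (K : ℝ) ^ 2) * ∑ k : Fin K, ∑ n, (σ K n 0) ^ 2 * (σ K n k.succ) ^ 2)
    -- the positive solution of the deterministic system at `z = -ρ`
    (t : (K : ℕ) → Fin (N K) → ℝ) (tt : (K : ℕ) → Fin K → ℝ)
    (ht_pos : ∀ K n, 0 < t K n) (htt_pos : ∀ K k, 0 < tt K k)
    (ht_eq : ∀ K (n : Fin (N K)), t K n =
      1 / (ρ * (1 + (1 / (K : ℝ)) * ∑ k : Fin K, (σ K n k.succ) ^ 2 * tt K k)))
    (htt_eq : ∀ K (k : Fin K), tt K k =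
      1 / (ρ * (1 + (1 / (K : ℝ)) * ∑ n, (σ K n k.succ) ^ 2 * t K n))) :
    let A : (K : ℕ) → Matrix (Fin K) (Fin K) ℝ := fun K => Matrix.of fun ℓ m =>
      (1 / (K : ℝ)) *
        ((1 / (K : ℝ)) * ∑ n, (σ K n ℓ.succ) ^ 2 * (σ K n m.succ) ^ 2 * (t K n) ^ 2) /
        (1 + (1 / (K : ℝ)) * ∑ n, (σ K n ℓ.succ) ^ 2 * t K n) ^ 2
    let Δ : (K : ℕ) → Matrix (Fin K) (Fin K) ℝ := fun K => Matrix.diagonal fun ℓ =>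
      (1 + (1 / (K : ℝ)) * ∑ n, (σ K n ℓ.succ) ^ 2 * t K n) ^ 2
    let g : (K : ℕ) → Fin K → ℝ := fun K k =>
      (1 / (K : ℝ)) * ∑ n, (σ K n 0) ^ 2 * (σ K n k.succ) ^ 2 * (t K n) ^ 2
    let Θsq : ℕ → ℝ := fun K =>
      (1 / (K : ℝ)) * dotProduct (g K) (((1 - A K)⁻¹ * (Δ K)⁻¹).mulVec (g K))
        + ((∫ ω, ‖W ω‖ ^ 4 ∂μ) - 1) * ((1 / (K : ℝ)) * ∑ n, (σ K n 0) ^ 4 * (t K n) ^ 2)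
    (∀ᶠ (K : ℕ) in atTop, IsUnit (1 - A K)) ∧
    (∃ c : ℝ, 0 < c ∧ ∀ᶠ (K : ℕ) in atTop, c ≤ Θsq K) ∧
    (∃ C : ℝ, ∀ᶠ (K : ℕ) in atTop, Θsq K ≤ C) := by
  intro A Δ g Θsq
  -- unfolding lemmas for the `let`-definitions
  have hA_def : ∀ K (ℓ m : Fin K), A K ℓ m =
      (1 / (K : ℝ)) *
        ((1 / (K : ℝ)) * ∑ n, (σ K n ℓ.succ) ^ 2 * (σ K n m.succ) ^ 2 * (t K n) ^ 2) /
        (1 + (1 / (K : ℝ)) * ∑ n, (σ K n ℓ.succ) ^ 2 * t K n) ^ 2 := fun K ℓ m => rfl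
  have hΔ_def : ∀ K, Δ K = Matrix.diagonal (fun ℓ : Fin K =>
      (1 + (1 / (K : ℝ)) * ∑ n, (σ K n ℓ.succ) ^ 2 * t K n) ^ 2) := fun K => rfl
  have hg_def : ∀ K (k : Fin K), g K k =
      (1 / (K : ℝ)) * ∑ n, (σ K n 0) ^ 2 * (σ K n k.succ) ^ 2 * (t K n) ^ 2 := fun K k => rfl
  have hΘ_def : ∀ K, Θsq K =
      (1 / (K : ℝ)) * dotProduct (g K) (((1 - A K)⁻¹ * (Δ K)⁻¹).mulVec (g K))
        + ((∫ ω, ‖W ω‖ ^ 4 ∂μ) - 1) * ((1 / (K : ℝ)) * ∑ n, (σ K n 0) ^ 4 * (t K n) ^ 2) :=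
    fun K => rfl
  obtain ⟨cr, hcr, hev_r⟩ := hratio_lb
  obtain ⟨c3, hc3, hev_3⟩ := hA3
  have hm4ge : 1 ≤ ∫ ω, ‖W ω‖ ^ 4 ∂μ := aux_m4_ge_one μ W hWmeas hWvar hW4
  have hσmax0 : 0 ≤ σmax := le_trans (hσ 1 ⟨0, hNpos 1⟩ 0) (hA2 1 ⟨0, hNpos 1⟩ 0)
  have hρσ : 0 < ρ + σmax ^ 2 := by positivity
  set θ : ℝ := σmax ^ 2 / (ρ + σmax ^ 2) with hθdef
  have hθ0 : 0 ≤ θ := by positivity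
  have hθ1 : θ < 1 := by rw [hθdef, div_lt_one hρσ]; linarith
  have hθ1' : 0 < 1 - θ := by linarith
  set tlo : ℝ := 1 / (ρ + σmax ^ 2) with htlodef
  have htlo0 : 0 < tlo := by positivity
  set ttlo : ℝ := 1 / (ρ + σmax ^ 2 / cr) with httlodef
  have httlo0 : 0 < ttlo := by positivity
  -- uniform bounds on t and tt
  have htt_ub : ∀ K (k : Fin K), tt K k ≤ 1 / ρ := by
    intro K k
    rw [htt_eq K k]
    have hs0 : 0 ≤ (1 / (K : ℝ)) * ∑ n, (σ K n k.succ) ^ 2 * t K n :=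
      mul_nonneg (by positivity)
        (Finset.sum_nonneg fun n _ => mul_nonneg (sq_nonneg _) (ht_pos K n).le)
    exact one_div_le_one_div_of_le hρ (by nlinarith)
  have ht_ub : ∀ K (n : Fin (N K)), t K n ≤ 1 / ρ := by
    intro K n
    rw [ht_eq K n]
    have hs0 : 0 ≤ (1 / (K : ℝ)) * ∑ k : Fin K, (σ K n k.succ) ^ 2 * tt K k :=
      mul_nonneg (by positivity)
        (Finset.sum_nonneg fun k _ => mul_nonneg (sq_nonneg _) (htt_pos K k).le)
    exact one_div_le_one_div_of_le hρ (by nlinarith)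
  have ht_lb : ∀ K (n : Fin (N K)), tlo ≤ t K n := by
    intro K n
    rw [ht_eq K n]
    set s : ℝ := (1 / (K : ℝ)) * ∑ k : Fin K, (σ K n k.succ) ^ 2 * tt K k with hs
    have hs0 : 0 ≤ s := mul_nonneg (by positivity)
      (Finset.sum_nonneg fun k _ => mul_nonneg (sq_nonneg _) (htt_pos K k).le)
    have hterm : ∀ k : Fin K, (σ K n k.succ) ^ 2 * tt K k ≤ σmax ^ 2 * (1 / ρ) :=
      fun k => mul_le_mul (pow_le_pow_left₀ (hσ K n k.succ) (hA2 K n k.succ) 2)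
        (htt_ub K k) (htt_pos K k).le (by positivity)
    have hsum : ∑ k : Fin K, (σ K n k.succ) ^ 2 * tt K k ≤ (K : ℝ) * (σmax ^ 2 * (1 / ρ)) := by
      calc ∑ k : Fin K, (σ K n k.succ) ^ 2 * tt K k
          ≤ ∑ _k : Fin K, σmax ^ 2 * (1 / ρ) := Finset.sum_le_sum fun k _ => hterm k
        _ = (K : ℝ) * (σmax ^ 2 * (1 / ρ)) := by
            rw [Finset.sum_const, Finset.card_univ, Fintype.card_fin, nsmul_eq_mul]
    have hsle : s ≤ σmax ^ 2 / ρ := by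
      rcases Nat.eq_zero_or_pos K with hK | hK
      · subst hK
        simp only [hs, Nat.cast_zero, Finset.univ_eq_empty, Finset.sum_empty, mul_zero]
        positivity
      · have hK0 : (0 : ℝ) < (K : ℝ) := Nat.cast_pos.mpr hK
        rw [hs]
        calc (1 / (K : ℝ)) * ∑ k : Fin K, (σ K n k.succ) ^ 2 * tt K k
            ≤ (1 / (K : ℝ)) * ((K : ℝ) * (σmax ^ 2 * (1 / ρ))) :=
              mul_le_mul_of_nonneg_left hsum (by positivity)
          _ = σmax ^ 2 / ρ := by field_simp
    rw [htlodef]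
    refine one_div_le_one_div_of_le (by nlinarith) ?_
    have : ρ * (1 + s) ≤ ρ * (1 + σmax ^ 2 / ρ) := by nlinarith
    calc ρ * (1 + s) ≤ ρ * (1 + σmax ^ 2 / ρ) := this
      _ = ρ + σmax ^ 2 := by field_simp
  -- the key identities of the fixed-point system
  have h1S : ∀ K (k : Fin K),
      1 + (1 / (K : ℝ)) * ∑ n, (σ K n k.succ) ^ 2 * t K n = 1 / (ρ * tt K k) := by
    intro K k
    set s : ℝ := (1 / (K : ℝ)) * ∑ n, (σ K n k.succ) ^ 2 * t K n with hs
    have hs0 : 0 ≤ s := mul_nonneg (by positivity)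
      (Finset.sum_nonneg fun n _ => mul_nonneg (sq_nonneg _) (ht_pos K n).le)
    have h1s : (0 : ℝ) < 1 + s := by linarith
    rw [htt_eq K k, ← hs]
    field_simp
  have hst : ∀ K (n : Fin (N K)),
      (1 / (K : ℝ)) * ∑ k : Fin K, (σ K n k.succ) ^ 2 * tt K k = 1 / (ρ * t K n) - 1 := by
    intro K n
    set s : ℝ := (1 / (K : ℝ)) * ∑ k : Fin K, (σ K n k.succ) ^ 2 * tt K k with hs
    have hs0 : 0 ≤ s := mul_nonneg (by positivity)
      (Finset.sum_nonneg fun k _ => mul_nonneg (sq_nonneg _) (htt_pos K k).le)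
    have h1s : (0 : ℝ) < 1 + s := by linarith
    rw [ht_eq K n, ← hs]
    field_simp
    ring
  -- global constants for the upper bound
  set Cg : ℝ := (1 / cr) * (σmax ^ 2 * σmax ^ 2 * (1 / ρ) ^ 2) with hCgdef
  have hCg0 : 0 ≤ Cg := by positivity
  set Crow : ℝ := (1 / ρ) / (1 - θ) / ttlo with hCrowdef
  have hCrow0 : 0 ≤ Crow := by positivity
  set Cub : ℝ := Cg * (Cg * Crow) + ((∫ ω, ‖W ω‖ ^ 4 ∂μ) - 1) * Cg with hCubdef
  -- the main eventual statement
  have hmain : ∀ᶠ (K : ℕ) in atTop,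
      IsUnit (1 - A K) ∧ Θsq K ≤ Cub ∧
      ((ρ * ttlo) ^ 2 * ((1 / (K : ℝ)) * ∑ ℓ, (g K ℓ) ^ 2)
        + ((∫ ω, ‖W ω‖ ^ 4 ∂μ) - 1) * ((1 / (K : ℝ)) * ∑ n, (σ K n 0) ^ 4 * (t K n) ^ 2)
          ≤ Θsq K) ∧
      (((1 / (K : ℝ)) * ∑ ℓ, g K ℓ) ^ 2 ≤ (1 / (K : ℝ)) * ∑ ℓ, (g K ℓ) ^ 2) ∧
      (cr * c3 ^ 2 * tlo ^ 2 ≤ (1 / (K : ℝ)) * ∑ n, (σ K n 0) ^ 4 * (t K n) ^ 2) ∧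
      (tlo ^ 2 * ((1 / (K : ℝ) ^ 2) * ∑ k : Fin K, ∑ n, (σ K n 0) ^ 2 * (σ K n k.succ) ^ 2)
        ≤ (1 / (K : ℝ)) * ∑ ℓ, g K ℓ) := by
    filter_upwards [hev_r, hev_3, Filter.eventually_ge_atTop 1] with K hKr hK3 hK1
    have hK0 : (0 : ℝ) < (K : ℝ) := by exact_mod_cast Nat.lt_of_lt_of_le Nat.zero_lt_one hK1
    have hN0 : (0 : ℝ) < (N K : ℝ) := Nat.cast_pos.mpr (hNpos K)
    have hcrN : cr * (N K : ℝ) ≤ (K : ℝ) := by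
      have := (le_div_iff₀ hN0).mp hKr
      linarith
    have hNdivK : (N K : ℝ) / (K : ℝ) ≤ 1 / cr := by
      rw [div_le_div_iff₀ hK0 hcr]
      nlinarith
    -- averaging helper
    have havg : ∀ (B : ℝ), 0 ≤ B → ∀ (f : Fin (N K) → ℝ), (∀ n, f n ≤ B) →
        (1 / (K : ℝ)) * ∑ n, f n ≤ (1 / cr) * B := by
      intro B hB f hf
      have h1 : ∑ n, f n ≤ (N K : ℝ) * B := by
        calc ∑ n, f n ≤ ∑ _n : Fin (N K), B := Finset.sum_le_sum fun n _ => hf n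
          _ = (N K : ℝ) * B := by
              rw [Finset.sum_const, Finset.card_univ, Fintype.card_fin, nsmul_eq_mul]
      calc (1 / (K : ℝ)) * ∑ n, f n ≤ (1 / (K : ℝ)) * ((N K : ℝ) * B) :=
            mul_le_mul_of_nonneg_left h1 (by positivity)
        _ = ((N K : ℝ) / (K : ℝ)) * B := by ring
        _ ≤ (1 / cr) * B := mul_le_mul_of_nonneg_right hNdivK hB
    -- lower bound on tt
    have httlo : ∀ k : Fin K, ttlo ≤ tt K k := by
      intro k
      rw [htt_eq K k]
      set s : ℝ := (1 / (K : ℝ)) * ∑ n, (σ K n k.succ) ^ 2 * t K n with hs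
      have hs0 : 0 ≤ s := mul_nonneg (by positivity)
        (Finset.sum_nonneg fun n _ => mul_nonneg (sq_nonneg _) (ht_pos K n).le)
      have hterm : ∀ n, (σ K n k.succ) ^ 2 * t K n ≤ σmax ^ 2 * (1 / ρ) :=
        fun n => mul_le_mul (pow_le_pow_left₀ (hσ K n k.succ) (hA2 K n k.succ) 2)
          (ht_ub K n) (ht_pos K n).le (by positivity)
      have hsle : s ≤ (1 / cr) * (σmax ^ 2 * (1 / ρ)) := havg _ (by positivity) _ hterm
      rw [httlodef]
      refine one_div_le_one_div_of_le (by nlinarith) ?_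
      have h2 : ρ * (1 + s) ≤ ρ + ρ * ((1 / cr) * (σmax ^ 2 * (1 / ρ))) := by nlinarith
      calc ρ * (1 + s) ≤ ρ + ρ * ((1 / cr) * (σmax ^ 2 * (1 / ρ))) := h2
        _ = ρ + σmax ^ 2 / cr := by field_simp
    -- rewriting the entries of A
    have hAentry : ∀ ℓ m : Fin K, A K ℓ m = (ρ * tt K ℓ) ^ 2 *
        ((1 / (K : ℝ)) * ((1 / (K : ℝ)) *
          ∑ n, (σ K n ℓ.succ) ^ 2 * (σ K n m.succ) ^ 2 * (t K n) ^ 2)) := by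
      intro ℓ m
      rw [hA_def K ℓ m, h1S K ℓ]
      have htk : (0 : ℝ) < ρ * tt K ℓ := mul_pos hρ (htt_pos K ℓ)
      rw [div_pow, one_pow, div_div_eq_mul_div, div_one]
      ring
    have hApos' : ∀ ℓ m : Fin K, 0 ≤ A K ℓ m := by
      intro ℓ m
      rw [hAentry ℓ m]
      have : 0 ≤ ∑ n, (σ K n ℓ.succ) ^ 2 * (σ K n m.succ) ^ 2 * (t K n) ^ 2 :=
        Finset.sum_nonneg fun n _ => by positivity
      positivity
    -- the weighted row-sum bound
    have hrow : ∀ ℓ : Fin K, ∑ m, A K ℓ m * tt K m ≤ θ * tt K ℓ := by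
      intro ℓ
      have key : ∑ m, A K ℓ m * tt K m = (ρ * tt K ℓ) ^ 2 * ((1 / (K : ℝ)) *
          ∑ n, (σ K n ℓ.succ) ^ 2 * (t K n) ^ 2 *
            ((1 / (K : ℝ)) * ∑ m, (σ K n m.succ) ^ 2 * tt K m)) := by
        simp only [hAentry, Finset.mul_sum, Finset.sum_mul]
        rw [Finset.sum_comm]
        exact Finset.sum_congr rfl fun n _ => Finset.sum_congr rfl fun m _ => by ring
      rw [key]
      have hterm : ∀ n, (σ K n ℓ.succ) ^ 2 * (t K n) ^ 2 *
          ((1 / (K : ℝ)) * ∑ m, (σ K n m.succ) ^ 2 * tt K m)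
          ≤ (σ K n ℓ.succ) ^ 2 * t K n * (θ / ρ) := by
        intro n
        rw [hst K n]
        have htn := ht_pos K n
        have heq : (t K n) ^ 2 * (1 / (ρ * t K n) - 1) = t K n * (1 / ρ - t K n) := by
          field_simp
        have hle : 1 / ρ - t K n ≤ θ / ρ := by
          have h1 : 1 / ρ - 1 / (ρ + σmax ^ 2) = (σmax ^ 2 / (ρ + σmax ^ 2)) / ρ := by
            rw [div_div, div_sub_div _ _ hρ.ne' hρσ.ne', mul_comm ρ (ρ + σmax ^ 2)]
            congr 1
            ring
          have h2 := ht_lb K n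
          rw [htlodef] at h2
          rw [hθdef]
          linarith
        calc (σ K n ℓ.succ) ^ 2 * (t K n) ^ 2 * (1 / (ρ * t K n) - 1)
            = (σ K n ℓ.succ) ^ 2 * (t K n * (1 / ρ - t K n)) := by rw [← heq]; ring
          _ ≤ (σ K n ℓ.succ) ^ 2 * (t K n * (θ / ρ)) := by
              refine mul_le_mul_of_nonneg_left ?_ (sq_nonneg _)
              exact mul_le_mul_of_nonneg_left hle htn.le
          _ = (σ K n ℓ.succ) ^ 2 * t K n * (θ / ρ) := by ring
      have hsum : ∑ n, (σ K n ℓ.succ) ^ 2 * (t K n) ^ 2 *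
          ((1 / (K : ℝ)) * ∑ m, (σ K n m.succ) ^ 2 * tt K m)
          ≤ (θ / ρ) * ∑ n, (σ K n ℓ.succ) ^ 2 * t K n := by
        calc ∑ n, (σ K n ℓ.succ) ^ 2 * (t K n) ^ 2 *
              ((1 / (K : ℝ)) * ∑ m, (σ K n m.succ) ^ 2 * tt K m)
            ≤ ∑ n, (σ K n ℓ.succ) ^ 2 * t K n * (θ / ρ) :=
              Finset.sum_le_sum fun n _ => hterm n
          _ = (θ / ρ) * ∑ n, (σ K n ℓ.succ) ^ 2 * t K n := by
              rw [Finset.mul_sum]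
              exact Finset.sum_congr rfl fun n _ => by ring
      set Sl : ℝ := (1 / (K : ℝ)) * ∑ n, (σ K n ℓ.succ) ^ 2 * t K n with hSl
      have hid : ρ * tt K ℓ * Sl = 1 - ρ * tt K ℓ := by
        have h := h1S K ℓ
        rw [← hSl] at h
        have httk := htt_pos K ℓ
        have : ρ * tt K ℓ * (1 + Sl) = 1 := by
          rw [h]
          field_simp
        linarith [this]
      have hSl0 : 0 ≤ Sl := mul_nonneg (by positivity)
        (Finset.sum_nonneg fun n _ => mul_nonneg (sq_nonneg _) (ht_pos K n).le)
      have httk := htt_pos K ℓ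
      have step : (ρ * tt K ℓ) ^ 2 * ((1 / (K : ℝ)) *
          ∑ n, (σ K n ℓ.succ) ^ 2 * (t K n) ^ 2 *
            ((1 / (K : ℝ)) * ∑ m, (σ K n m.succ) ^ 2 * tt K m))
          ≤ (ρ * tt K ℓ) ^ 2 * ((θ / ρ) * Sl) := by
        refine mul_le_mul_of_nonneg_left ?_ (sq_nonneg _)
        calc (1 / (K : ℝ)) * ∑ n, (σ K n ℓ.succ) ^ 2 * (t K n) ^ 2 *
              ((1 / (K : ℝ)) * ∑ m, (σ K n m.succ) ^ 2 * tt K m)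
            ≤ (1 / (K : ℝ)) * ((θ / ρ) * ∑ n, (σ K n ℓ.succ) ^ 2 * t K n) :=
              mul_le_mul_of_nonneg_left hsum (by positivity)
          _ = (θ / ρ) * Sl := by rw [hSl]; ring
      refine le_trans step ?_
      have hfin : (ρ * tt K ℓ) ^ 2 * ((θ / ρ) * Sl) = θ * (ρ * tt K ℓ * Sl) * tt K ℓ := by
        field_simp
      rw [hfin, hid]
      nlinarith [mul_nonneg (mul_nonneg hθ0 hρ.le) (mul_nonneg httk.le httk.le)]
    obtain ⟨hunit, hCpos, hCdiag, hCrow⟩ :=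
      aux_matrix_key (A K) (tt K) θ hθ0 hθ1 hApos' (htt_pos K) hrow
    -- facts about the diagonal matrix
    have hSpos : ∀ m : Fin K,
        (0 : ℝ) ≤ (1 / (K : ℝ)) * ∑ n, (σ K n m.succ) ^ 2 * t K n := fun m =>
      mul_nonneg (by positivity)
        (Finset.sum_nonneg fun n _ => mul_nonneg (sq_nonneg _) (ht_pos K n).le)
    have hdpos : ∀ m : Fin K,
        (0 : ℝ) < (1 + (1 / (K : ℝ)) * ∑ n, (σ K n m.succ) ^ 2 * t K n) ^ 2 := fun m => by
      have := hSpos m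
      positivity
    have hΔinv : (Δ K)⁻¹ = Matrix.diagonal (fun m : Fin K =>
        ((1 + (1 / (K : ℝ)) * ∑ n, (σ K n m.succ) ^ 2 * t K n) ^ 2)⁻¹) := by
      apply Matrix.inv_eq_right_inv
      rw [hΔ_def K, Matrix.diagonal_mul_diagonal]
      ext i j
      by_cases h : i = j
      · subst h
        simp only [Matrix.diagonal_apply_eq, Matrix.one_apply_eq]
        exact mul_inv_cancel₀ (hdpos i).ne'
      · simp [Matrix.diagonal_apply_ne _ h, Matrix.one_apply_ne h]
    have hdinv_le : ∀ m : Fin K,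
        ((1 + (1 / (K : ℝ)) * ∑ n, (σ K n m.succ) ^ 2 * t K n) ^ 2)⁻¹ ≤ 1 := by
      intro m
      have h1 : (1 : ℝ) ≤ (1 + (1 / (K : ℝ)) * ∑ n, (σ K n m.succ) ^ 2 * t K n) ^ 2 := by
        have := hSpos m
        nlinarith
      exact inv_le_one_of_one_le₀ h1
    have hdinv_ge : ∀ m : Fin K, (ρ * ttlo) ^ 2 ≤
        ((1 + (1 / (K : ℝ)) * ∑ n, (σ K n m.succ) ^ 2 * t K n) ^ 2)⁻¹ := by
      intro m
      have h1 := h1S K m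
      have h2 : 1 / (ρ * tt K m) ≤ 1 / (ρ * ttlo) :=
        one_div_le_one_div_of_le (by positivity)
          (mul_le_mul_of_nonneg_left (httlo m) hρ.le)
      have h3 : (1 + (1 / (K : ℝ)) * ∑ n, (σ K n m.succ) ^ 2 * t K n) ^ 2
          ≤ (1 / (ρ * ttlo)) ^ 2 := by
        refine pow_le_pow_left₀ ?_ (by rw [h1]; exact h2) 2
        have := hSpos m
        linarith
      calc (ρ * ttlo) ^ 2 = ((1 / (ρ * ttlo)) ^ 2)⁻¹ := by
            rw [div_pow, one_pow, inv_div, div_one]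
        _ ≤ ((1 + (1 / (K : ℝ)) * ∑ n, (σ K n m.succ) ^ 2 * t K n) ^ 2)⁻¹ :=
            inv_anti₀ (hdpos m) h3
    -- g bounds
    have hg0 : ∀ k : Fin K, 0 ≤ g K k := by
      intro k
      rw [hg_def K k]
      exact mul_nonneg (by positivity) (Finset.sum_nonneg fun n _ => by positivity)
    have hgub : ∀ k : Fin K, g K k ≤ Cg := by
      intro k
      rw [hg_def K k, hCgdef]
      refine havg _ (by positivity) _ fun n => ?_
      have h1 : (σ K n 0) ^ 2 ≤ σmax ^ 2 := pow_le_pow_left₀ (hσ K n 0) (hA2 K n 0) 2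
      have h2 : (σ K n k.succ) ^ 2 ≤ σmax ^ 2 :=
        pow_le_pow_left₀ (hσ K n k.succ) (hA2 K n k.succ) 2
      have h3 : (t K n) ^ 2 ≤ (1 / ρ) ^ 2 := pow_le_pow_left₀ (ht_pos K n).le (ht_ub K n) 2
      exact mul_le_mul (mul_le_mul h1 h2 (sq_nonneg _) (by positivity)) h3 (sq_nonneg _)
        (by positivity)
    -- the quadratic form
    have hQ : dotProduct (g K) (((1 - A K)⁻¹ * (Δ K)⁻¹).mulVec (g K)) =
        ∑ ℓ, g K ℓ * ∑ m, (1 - A K)⁻¹ ℓ m *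
          ((1 + (1 / (K : ℝ)) * ∑ n, (σ K n m.succ) ^ 2 * t K n) ^ 2)⁻¹ * g K m := by
      rw [hΔinv]
      simp only [dotProduct, Matrix.mulVec, Matrix.mul_diagonal]
    have hinner0 : ∀ ℓ : Fin K, 0 ≤ ∑ m, (1 - A K)⁻¹ ℓ m *
        ((1 + (1 / (K : ℝ)) * ∑ n, (σ K n m.succ) ^ 2 * t K n) ^ 2)⁻¹ * g K m := by
      intro ℓ
      refine Finset.sum_nonneg fun m _ => ?_
      exact mul_nonneg (mul_nonneg (hCpos ℓ m) (inv_nonneg.mpr (hdpos m).le)) (hg0 m)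
    have hCsum : ∀ ℓ : Fin K, ∑ m, (1 - A K)⁻¹ ℓ m ≤ Crow := by
      intro ℓ
      have h1 : (∑ m, (1 - A K)⁻¹ ℓ m) * ttlo ≤ ∑ m, (1 - A K)⁻¹ ℓ m * tt K m := by
        rw [Finset.sum_mul]
        exact Finset.sum_le_sum fun m _ =>
          mul_le_mul_of_nonneg_left (httlo m) (hCpos ℓ m)
      have h2 : tt K ℓ / (1 - θ) ≤ (1 / ρ) / (1 - θ) := by
        gcongr
        exact htt_ub K ℓ
      have h3 : (∑ m, (1 - A K)⁻¹ ℓ m) * ttlo ≤ (1 / ρ) / (1 - θ) :=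
        le_trans h1 (le_trans (hCrow ℓ) h2)
      rw [hCrowdef]
      rw [div_eq_mul_inv ((1 / ρ) / (1 - θ)) ttlo]
      rw [← le_div_iff₀ httlo0] at h3
      rw [div_eq_mul_inv] at h3
      exact h3
    have hinner_ub : ∀ ℓ : Fin K, ∑ m, (1 - A K)⁻¹ ℓ m *
        ((1 + (1 / (K : ℝ)) * ∑ n, (σ K n m.succ) ^ 2 * t K n) ^ 2)⁻¹ * g K m
        ≤ Cg * Crow := by
      intro ℓ
      calc ∑ m, (1 - A K)⁻¹ ℓ m *
            ((1 + (1 / (K : ℝ)) * ∑ n, (σ K n m.succ) ^ 2 * t K n) ^ 2)⁻¹ * g K m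
          ≤ ∑ m, (1 - A K)⁻¹ ℓ m * Cg := by
            refine Finset.sum_le_sum fun m _ => ?_
            have hdg : ((1 + (1 / (K : ℝ)) * ∑ n, (σ K n m.succ) ^ 2 * t K n) ^ 2)⁻¹ * g K m
                ≤ Cg := by
              calc ((1 + (1 / (K : ℝ)) * ∑ n, (σ K n m.succ) ^ 2 * t K n) ^ 2)⁻¹ * g K m
                  ≤ 1 * Cg := mul_le_mul (hdinv_le m) (hgub m) (hg0 m)
                    (by norm_num)
                _ = Cg := one_mul Cg
            calc (1 - A K)⁻¹ ℓ m *
                  ((1 + (1 / (K : ℝ)) * ∑ n, (σ K n m.succ) ^ 2 * t K n) ^ 2)⁻¹ * g K m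
                = (1 - A K)⁻¹ ℓ m *
                  (((1 + (1 / (K : ℝ)) * ∑ n, (σ K n m.succ) ^ 2 * t K n) ^ 2)⁻¹ * g K m) := by
                  ring
              _ ≤ (1 - A K)⁻¹ ℓ m * Cg := mul_le_mul_of_nonneg_left hdg (hCpos ℓ m)
        _ = (∑ m, (1 - A K)⁻¹ ℓ m) * Cg := by rw [Finset.sum_mul]
        _ ≤ Crow * Cg := mul_le_mul_of_nonneg_right (hCsum ℓ) hCg0
        _ = Cg * Crow := by ring
    have hinner_lb : ∀ ℓ : Fin K, (ρ * ttlo) ^ 2 * g K ℓ ≤ ∑ m, (1 - A K)⁻¹ ℓ m *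
        ((1 + (1 / (K : ℝ)) * ∑ n, (σ K n m.succ) ^ 2 * t K n) ^ 2)⁻¹ * g K m := by
      intro ℓ
      have hsingle : (1 - A K)⁻¹ ℓ ℓ *
          ((1 + (1 / (K : ℝ)) * ∑ n, (σ K n ℓ.succ) ^ 2 * t K n) ^ 2)⁻¹ * g K ℓ
          ≤ ∑ m, (1 - A K)⁻¹ ℓ m *
            ((1 + (1 / (K : ℝ)) * ∑ n, (σ K n m.succ) ^ 2 * t K n) ^ 2)⁻¹ * g K m :=
        Finset.single_le_sum (f := fun m => (1 - A K)⁻¹ ℓ m *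
            ((1 + (1 / (K : ℝ)) * ∑ n, (σ K n m.succ) ^ 2 * t K n) ^ 2)⁻¹ * g K m)
          (fun m _ => mul_nonneg (mul_nonneg (hCpos ℓ m) (inv_nonneg.mpr (hdpos m).le))
            (hg0 m)) (Finset.mem_univ ℓ)
      refine le_trans ?_ hsingle
      calc (ρ * ttlo) ^ 2 * g K ℓ
          = 1 * ((ρ * ttlo) ^ 2 * g K ℓ) := (one_mul _).symm
        _ ≤ (1 - A K)⁻¹ ℓ ℓ *
            (((1 + (1 / (K : ℝ)) * ∑ n, (σ K n ℓ.succ) ^ 2 * t K n) ^ 2)⁻¹ * g K ℓ) := by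
            refine mul_le_mul (hCdiag ℓ) ?_ (by positivity) ?_
            · exact mul_le_mul_of_nonneg_right (hdinv_ge ℓ) (hg0 ℓ)
            · exact le_trans (by norm_num) (hCdiag ℓ)
        _ = (1 - A K)⁻¹ ℓ ℓ *
            ((1 + (1 / (K : ℝ)) * ∑ n, (σ K n ℓ.succ) ^ 2 * t K n) ^ 2)⁻¹ * g K ℓ := by ring
    -- second term bounds
    have hT20 : 0 ≤ (1 / (K : ℝ)) * ∑ n, (σ K n 0) ^ 4 * (t K n) ^ 2 :=
      mul_nonneg (by positivity) (Finset.sum_nonneg fun n _ => by positivity)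
    have hT2ub : (1 / (K : ℝ)) * ∑ n, (σ K n 0) ^ 4 * (t K n) ^ 2 ≤ Cg := by
      rw [hCgdef]
      refine havg _ (by positivity) _ fun n => ?_
      have h1 : (σ K n 0) ^ 4 ≤ σmax ^ 4 := pow_le_pow_left₀ (hσ K n 0) (hA2 K n 0) 4
      have h3 : (t K n) ^ 2 ≤ (1 / ρ) ^ 2 := pow_le_pow_left₀ (ht_pos K n).le (ht_ub K n) 2
      have h4 : (0:ℝ) ≤ (σ K n 0) ^ 4 := by positivity
      have h5 : (0:ℝ) ≤ (t K n) ^ 2 := sq_nonneg _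
      nlinarith [pow_nonneg hσmax0 4]
    refine ⟨hunit, ?_, ?_, ?_, ?_, ?_⟩
    · -- upper bound for Θsq
      rw [hΘ_def K, hQ, hCubdef]
      have hQub : ∑ ℓ, g K ℓ * ∑ m, (1 - A K)⁻¹ ℓ m *
          ((1 + (1 / (K : ℝ)) * ∑ n, (σ K n m.succ) ^ 2 * t K n) ^ 2)⁻¹ * g K m
          ≤ (K : ℝ) * (Cg * (Cg * Crow)) := by
        calc ∑ ℓ, g K ℓ * ∑ m, (1 - A K)⁻¹ ℓ m *
              ((1 + (1 / (K : ℝ)) * ∑ n, (σ K n m.succ) ^ 2 * t K n) ^ 2)⁻¹ * g K m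
            ≤ ∑ _ℓ : Fin K, Cg * (Cg * Crow) := by
              refine Finset.sum_le_sum fun ℓ _ => ?_
              exact mul_le_mul (hgub ℓ) (hinner_ub ℓ) (hinner0 ℓ) hCg0
          _ = (K : ℝ) * (Cg * (Cg * Crow)) := by
              rw [Finset.sum_const, Finset.card_univ, Fintype.card_fin, nsmul_eq_mul]
      have h1 : (1 / (K : ℝ)) * (∑ ℓ, g K ℓ * ∑ m, (1 - A K)⁻¹ ℓ m *
          ((1 + (1 / (K : ℝ)) * ∑ n, (σ K n m.succ) ^ 2 * t K n) ^ 2)⁻¹ * g K m)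
          ≤ Cg * (Cg * Crow) := by
        calc (1 / (K : ℝ)) * (∑ ℓ, g K ℓ * ∑ m, (1 - A K)⁻¹ ℓ m *
              ((1 + (1 / (K : ℝ)) * ∑ n, (σ K n m.succ) ^ 2 * t K n) ^ 2)⁻¹ * g K m)
            ≤ (1 / (K : ℝ)) * ((K : ℝ) * (Cg * (Cg * Crow))) :=
              mul_le_mul_of_nonneg_left hQub (by positivity)
          _ = Cg * (Cg * Crow) := by field_simp
      have h2 : ((∫ ω, ‖W ω‖ ^ 4 ∂μ) - 1) * ((1 / (K : ℝ)) * ∑ n, (σ K n 0) ^ 4 * (t K n) ^ 2)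
          ≤ ((∫ ω, ‖W ω‖ ^ 4 ∂μ) - 1) * Cg :=
        mul_le_mul_of_nonneg_left hT2ub (by linarith)
      linarith
    · -- lower bound for Θsq
      rw [hΘ_def K, hQ]
      have hQlb : (ρ * ttlo) ^ 2 * ∑ ℓ, (g K ℓ) ^ 2 ≤
          ∑ ℓ, g K ℓ * ∑ m, (1 - A K)⁻¹ ℓ m *
            ((1 + (1 / (K : ℝ)) * ∑ n, (σ K n m.succ) ^ 2 * t K n) ^ 2)⁻¹ * g K m := by
        rw [Finset.mul_sum]
        refine Finset.sum_le_sum fun ℓ _ => ?_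
        calc (ρ * ttlo) ^ 2 * (g K ℓ) ^ 2 = g K ℓ * ((ρ * ttlo) ^ 2 * g K ℓ) := by ring
          _ ≤ g K ℓ * ∑ m, (1 - A K)⁻¹ ℓ m *
              ((1 + (1 / (K : ℝ)) * ∑ n, (σ K n m.succ) ^ 2 * t K n) ^ 2)⁻¹ * g K m :=
            mul_le_mul_of_nonneg_left (hinner_lb ℓ) (hg0 ℓ)
      have h1 : (ρ * ttlo) ^ 2 * ((1 / (K : ℝ)) * ∑ ℓ, (g K ℓ) ^ 2)
          ≤ (1 / (K : ℝ)) * ∑ ℓ, g K ℓ * ∑ m, (1 - A K)⁻¹ ℓ m *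
            ((1 + (1 / (K : ℝ)) * ∑ n, (σ K n m.succ) ^ 2 * t K n) ^ 2)⁻¹ * g K m := by
        calc (ρ * ttlo) ^ 2 * ((1 / (K : ℝ)) * ∑ ℓ, (g K ℓ) ^ 2)
            = (1 / (K : ℝ)) * ((ρ * ttlo) ^ 2 * ∑ ℓ, (g K ℓ) ^ 2) := by ring
          _ ≤ (1 / (K : ℝ)) * ∑ ℓ, g K ℓ * ∑ m, (1 - A K)⁻¹ ℓ m *
              ((1 + (1 / (K : ℝ)) * ∑ n, (σ K n m.succ) ^ 2 * t K n) ^ 2)⁻¹ * g K m :=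
            mul_le_mul_of_nonneg_left hQlb (by positivity)
      linarith
    · -- Cauchy-Schwarz
      have hCS := sq_sum_le_card_mul_sum_sq (s := (Finset.univ : Finset (Fin K)))
        (f := fun ℓ => g K ℓ)
      rw [Finset.card_univ, Fintype.card_fin] at hCS
      have h1 : ((1 / (K : ℝ)) * ∑ ℓ, g K ℓ) ^ 2
          = (1 / (K : ℝ)) ^ 2 * (∑ ℓ, g K ℓ) ^ 2 := by ring
      rw [h1]
      calc (1 / (K : ℝ)) ^ 2 * (∑ ℓ, g K ℓ) ^ 2
          ≤ (1 / (K : ℝ)) ^ 2 * ((K : ℝ) * ∑ ℓ, (g K ℓ) ^ 2) := by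
            refine mul_le_mul_of_nonneg_left ?_ (by positivity)
            exact_mod_cast hCS
        _ = (1 / (K : ℝ)) * ∑ ℓ, (g K ℓ) ^ 2 := by field_simp
    · -- lower bound on the fourth-moment term, via (A3)
      have hA30 := hK3 0
      have hS2 : (K : ℝ) * c3 ≤ ∑ n, (σ K n 0) ^ 2 := by
        have h := hA30
        rw [show (1 / (K : ℝ)) * ∑ n, (σ K n 0) ^ 2
            = (∑ n, (σ K n 0) ^ 2) / (K : ℝ) from by ring] at h
        have := (le_div_iff₀ hK0).mp h
        linarith
      have hCS := sq_sum_le_card_mul_sum_sq (s := (Finset.univ : Finset (Fin (N K))))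
        (f := fun n => (σ K n 0) ^ 2)
      rw [Finset.card_univ, Fintype.card_fin] at hCS
      have hCS' : (∑ n, (σ K n 0) ^ 2) ^ 2 ≤ (N K : ℝ) * ∑ n, (σ K n 0) ^ 4 := by
        have h2 : ∑ n, ((σ K n 0) ^ 2) ^ 2 = ∑ n, (σ K n 0) ^ 4 :=
          Finset.sum_congr rfl fun n _ => by ring
        calc (∑ n, (σ K n 0) ^ 2) ^ 2 ≤ (N K : ℝ) * ∑ n, ((σ K n 0) ^ 2) ^ 2 := by
              exact_mod_cast hCS
          _ = (N K : ℝ) * ∑ n, (σ K n 0) ^ 4 := by rw [h2]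
      have hsq : ((K : ℝ) * c3) ^ 2 ≤ (∑ n, (σ K n 0) ^ 2) ^ 2 :=
        pow_le_pow_left₀ (by positivity) hS2 2
      have e2 : (K : ℝ) ^ 2 * c3 ^ 2 ≤ (N K : ℝ) * ∑ n, (σ K n 0) ^ 4 := by
        calc (K : ℝ) ^ 2 * c3 ^ 2 = ((K : ℝ) * c3) ^ 2 := by ring
          _ ≤ (∑ n, (σ K n 0) ^ 2) ^ 2 := hsq
          _ ≤ (N K : ℝ) * ∑ n, (σ K n 0) ^ 4 := hCS'
      have hS40 : 0 ≤ ∑ n, (σ K n 0) ^ 4 := Finset.sum_nonneg fun n _ => by positivity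
      have e3 : (K : ℝ) * (cr * c3 ^ 2) ≤ ∑ n, (σ K n 0) ^ 4 := by
        nlinarith [mul_le_mul_of_nonneg_right hcrN (mul_nonneg hK0.le (sq_nonneg c3))]
      have e4 : cr * c3 ^ 2 ≤ (1 / (K : ℝ)) * ∑ n, (σ K n 0) ^ 4 := by
        rw [show (1 / (K : ℝ)) * ∑ n, (σ K n 0) ^ 4
            = (∑ n, (σ K n 0) ^ 4) / (K : ℝ) from by ring]
        rw [le_div_iff₀ hK0]
        linarith
      have e5 : tlo ^ 2 * ((1 / (K : ℝ)) * ∑ n, (σ K n 0) ^ 4)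
          ≤ (1 / (K : ℝ)) * ∑ n, (σ K n 0) ^ 4 * (t K n) ^ 2 := by
        rw [show tlo ^ 2 * ((1 / (K : ℝ)) * ∑ n, (σ K n 0) ^ 4)
            = (1 / (K : ℝ)) * ∑ n, (σ K n 0) ^ 4 * tlo ^ 2 from by
          rw [← Finset.sum_mul]; ring]
        refine mul_le_mul_of_nonneg_left ?_ (by positivity)
        refine Finset.sum_le_sum fun n _ => ?_
        refine mul_le_mul_of_nonneg_left ?_ (by positivity)
        exact pow_le_pow_left₀ htlo0.le (ht_lb K n) 2
      calc cr * c3 ^ 2 * tlo ^ 2 = tlo ^ 2 * (cr * c3 ^ 2) := by ring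
        _ ≤ tlo ^ 2 * ((1 / (K : ℝ)) * ∑ n, (σ K n 0) ^ 4) :=
            mul_le_mul_of_nonneg_left e4 (by positivity)
        _ ≤ (1 / (K : ℝ)) * ∑ n, (σ K n 0) ^ 4 * (t K n) ^ 2 := e5
    · -- lower bound on the average of g, via (A4) case 2 input
      have h1 : (1 / (K : ℝ)) * ∑ ℓ, g K ℓ
          = (1 / (K : ℝ)) * ((1 / (K : ℝ)) *
            ∑ k : Fin K, ∑ n, (σ K n 0) ^ 2 * (σ K n k.succ) ^ 2 * (t K n) ^ 2) := by
        simp only [hg_def]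
        rw [← Finset.mul_sum]
      rw [h1]
      have h2 : ∑ k : Fin K, ∑ n, (σ K n 0) ^ 2 * (σ K n k.succ) ^ 2 * tlo ^ 2
          ≤ ∑ k : Fin K, ∑ n, (σ K n 0) ^ 2 * (σ K n k.succ) ^ 2 * (t K n) ^ 2 := by
        refine Finset.sum_le_sum fun k _ => Finset.sum_le_sum fun n _ => ?_
        refine mul_le_mul_of_nonneg_left ?_ (by positivity)
        exact pow_le_pow_left₀ htlo0.le (ht_lb K n) 2
      calc tlo ^ 2 * ((1 / (K : ℝ) ^ 2) *
            ∑ k : Fin K, ∑ n, (σ K n 0) ^ 2 * (σ K n k.succ) ^ 2)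
          = (1 / (K : ℝ)) * ((1 / (K : ℝ)) *
            ∑ k : Fin K, ∑ n, (σ K n 0) ^ 2 * (σ K n k.succ) ^ 2 * tlo ^ 2) := by
            rw [show ∑ k : Fin K, ∑ n, (σ K n 0) ^ 2 * (σ K n k.succ) ^ 2 * tlo ^ 2
                = (∑ k : Fin K, ∑ n, (σ K n 0) ^ 2 * (σ K n k.succ) ^ 2) * tlo ^ 2 from by
              rw [Finset.sum_mul]
              exact Finset.sum_congr rfl fun k _ => by rw [Finset.sum_mul]]
            field_simp
        _ ≤ (1 / (K : ℝ)) * ((1 / (K : ℝ)) *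
            ∑ k : Fin K, ∑ n, (σ K n 0) ^ 2 * (σ K n k.succ) ^ 2 * (t K n) ^ 2) := by
            refine mul_le_mul_of_nonneg_left (mul_le_mul_of_nonneg_left h2 (by positivity))
              (by positivity)
  -- assemble the three conclusions
  refine ⟨hmain.mono fun K h => h.1, ?_, ⟨Cub, hmain.mono fun K h => h.2.1⟩⟩
  rcases hA4 with h4 | ⟨c4, hc4, hev4⟩
  · refine ⟨((∫ ω, ‖W ω‖ ^ 4 ∂μ) - 1) * (cr * c3 ^ 2 * tlo ^ 2), ?_, ?_⟩
    · have : 0 < cr * c3 ^ 2 * tlo ^ 2 := by positivity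
      nlinarith
    · refine hmain.mono fun K h => ?_
      obtain ⟨-, -, h3, -, h5, -⟩ := h
      have hfirst : 0 ≤ (ρ * ttlo) ^ 2 * ((1 / (K : ℝ)) * ∑ ℓ, (g K ℓ) ^ 2) := by positivity
      have hsecond : ((∫ ω, ‖W ω‖ ^ 4 ∂μ) - 1) * (cr * c3 ^ 2 * tlo ^ 2)
          ≤ ((∫ ω, ‖W ω‖ ^ 4 ∂μ) - 1) * ((1 / (K : ℝ)) * ∑ n, (σ K n 0) ^ 4 * (t K n) ^ 2) :=
        mul_le_mul_of_nonneg_left h5 (by linarith)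
      exact le_trans (le_trans hsecond (le_add_of_nonneg_left hfirst)) h3
  · refine ⟨(ρ * ttlo) ^ 2 * (tlo ^ 2 * c4) ^ 2, by positivity, ?_⟩
    filter_upwards [hmain, hev4] with K h h4K
    obtain ⟨-, -, h3, hcs, -, h6⟩ := h
    have ha : tlo ^ 2 * c4 ≤ (1 / (K : ℝ)) * ∑ ℓ, g K ℓ := by
      refine le_trans ?_ h6
      exact mul_le_mul_of_nonneg_left h4K (by positivity)
    have hb : (tlo ^ 2 * c4) ^ 2 ≤ ((1 / (K : ℝ)) * ∑ ℓ, g K ℓ) ^ 2 :=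
      pow_le_pow_left₀ (by positivity) ha 2
    have hc : (tlo ^ 2 * c4) ^ 2 ≤ (1 / (K : ℝ)) * ∑ ℓ, (g K ℓ) ^ 2 :=
      le_trans hb hcs
    have hd : (ρ * ttlo) ^ 2 * (tlo ^ 2 * c4) ^ 2
        ≤ (ρ * ttlo) ^ 2 * ((1 / (K : ℝ)) * ∑ ℓ, (g K ℓ) ^ 2) :=
      mul_le_mul_of_nonneg_left hc (by positivity)
    have he : 0 ≤ ((∫ ω, ‖W ω‖ ^ 4 ∂μ) - 1) *
        ((1 / (K : ℝ)) * ∑ n, (σ K n 0) ^ 4 * (t K n) ^ 2) := by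
      refine mul_nonneg (by linarith) ?_
      refine mul_nonneg (by positivity) (Finset.sum_nonneg fun n _ => by positivity)
    exact le_trans (le_trans hd (le_add_of_nonneg_right he)) h3

end
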